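/- For integers λ ≥ 0 and 0 ≤ μ ≤ λ, define v_{±μ} = (±z₁ + i z₂)^μ · z₃^{λ−μ} in C[z₁,z₂,z₃]_λ. Then the 2λ+1 classes of v_μ (for −λ ≤ μ ≤ λ) modulo (z₁²+z₂²+z₃²)·C[z₁,z₂,z₃]_{λ−2} form a basis of the quotient space. -/

import Mathlib

open MvPolynomial

/-- The quadratic form `z₁² + z₂² + z₃²` as a polynomial in three variables. -/
noncomputable def qpoly : MvPolynomial (Fin 3) ℂ := X 0 ^ 2 + X 1 ^ 2 + X 2 ^ 2

/-- The subspace `(z₁²+z₂²+z₃²) · ℂ[z₁,z₂,z₃]_{λ−2}`, taken to be `0` when `λ < 2`. -/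
noncomputable def harmSub (lam : ℕ) : Submodule ℂ (MvPolynomial (Fin 3) ℂ) :=
  if 2 ≤ lam then
    (homogeneousSubmodule (Fin 3) ℂ (lam - 2)).map (LinearMap.mulLeft ℂ qpoly)
  else ⊥

/-- The element `v_μ = (±z₁ + i z₂)^{|μ|} · z₃^{λ−|μ|}` (sign that of `μ`). -/
noncomputable def vmu (lam : ℕ) (μ : ℤ) : MvPolynomial (Fin 3) ℂ :=
  ((if 0 ≤ μ then (1 : ℂ) else -1) • X 0 + Complex.I • X 1) ^ μ.natAbs *
    X 2 ^ (lam - μ.natAbs)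

noncomputable def upoly : MvPolynomial (Fin 3) ℂ := (1:ℂ) • X 0 + Complex.I • X 1
noncomputable def wpoly : MvPolynomial (Fin 3) ℂ := (-1:ℂ) • X 0 + Complex.I • X 1

lemma vmu_nonneg (lam : ℕ) (μ : ℤ) (h : 0 ≤ μ) :
    vmu lam μ = upoly ^ μ.natAbs * X 2 ^ (lam - μ.natAbs) := by
  rw [vmu, if_pos h]; rfl

lemma vmu_neg (lam : ℕ) (μ : ℤ) (h : ¬ 0 ≤ μ) :
    vmu lam μ = wpoly ^ μ.natAbs * X 2 ^ (lam - μ.natAbs) := by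
  rw [vmu, if_neg h]; rfl

lemma hICsq : (C Complex.I : MvPolynomial (Fin 3) ℂ)^2 = -1 := by
  rw [← C_pow, Complex.I_sq, map_neg, map_one]

lemma uw_eq : upoly * wpoly = X 2 ^ 2 - qpoly := by
  simp only [upoly, wpoly, qpoly, smul_eq_C_mul, map_one, map_neg, one_mul]
  linear_combination (X 1 : MvPolynomial (Fin 3) ℂ)^2 * hICsq

lemma uwt_homog (p q r : ℕ) :
    (upoly ^ p * wpoly ^ q * X 2 ^ r).IsHomogeneous (p + q + r) := by
  have hu : upoly.IsHomogeneous 1 := by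
    rw [← mem_homogeneousSubmodule]
    exact Submodule.add_mem _
      (Submodule.smul_mem _ _ ((mem_homogeneousSubmodule _ _).2 (isHomogeneous_X _ 0)))
      (Submodule.smul_mem _ _ ((mem_homogeneousSubmodule _ _).2 (isHomogeneous_X _ 1)))
  have hw : wpoly.IsHomogeneous 1 := by
    rw [← mem_homogeneousSubmodule]
    exact Submodule.add_mem _
      (Submodule.smul_mem _ _ ((mem_homogeneousSubmodule _ _).2 (isHomogeneous_X _ 0)))
      (Submodule.smul_mem _ _ ((mem_homogeneousSubmodule _ _).2 (isHomogeneous_X _ 1)))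
  have := ((hu.pow p).mul (hw.pow q)).mul ((isHomogeneous_X ℂ (2 : Fin 3)).pow r)
  simpa using this

lemma key (lam p q r : ℕ) (h : p + q + r = lam) :
    upoly ^ p * wpoly ^ q * X 2 ^ r - vmu lam ((p:ℤ) - q) ∈ harmSub lam := by
  induction q generalizing p r with
  | zero =>
    rw [vmu_nonneg _ _ (by simp)]
    have h1 : (((p:ℤ) - (0:ℕ))).natAbs = p := by omega
    rw [h1, (by omega : lam - p = r)]
    simp
  | succ q ih =>
    cases p with
    | zero =>
      rw [vmu_neg _ _ (by omega)]
      have h1 : (((0:ℕ):ℤ) - ((q+1:ℕ):ℤ)).natAbs = q + 1 := by omega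
      rw [h1, (by omega : lam - (q+1) = r)]
      simp
    | succ p =>
      have expand : upoly ^ (p+1) * wpoly ^ (q+1) * X 2 ^ r
          = upoly ^ p * wpoly ^ q * X 2 ^ (r+2)
            - qpoly * (upoly ^ p * wpoly ^ q * X 2 ^ r) := by
        rw [pow_succ upoly, pow_succ wpoly]
        linear_combination (upoly ^ p * wpoly ^ q * X 2 ^ r) * uw_eq
      have hmem : qpoly * (upoly ^ p * wpoly ^ q * X 2 ^ r) ∈ harmSub lam := by
        rw [harmSub, if_pos (by omega : 2 ≤ lam)]
        refine ⟨upoly ^ p * wpoly ^ q * X 2 ^ r, ?_, rfl⟩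
        simp only [SetLike.mem_coe, mem_homogeneousSubmodule]
        have e : lam - 2 = p + q + r := by omega
        rw [e]
        exact uwt_homog p q r
      have harg : (((p+1:ℕ):ℤ) - ((q+1:ℕ):ℤ)) = (p:ℤ) - q := by push_cast; ring
      rw [harg, expand]
      have h2 : upoly ^ p * wpoly ^ q * X 2 ^ (r+2)
            - qpoly * (upoly ^ p * wpoly ^ q * X 2 ^ r) - vmu lam ((p:ℤ) - q)
          = (upoly ^ p * wpoly ^ q * X 2 ^ (r+2) - vmu lam ((p:ℤ) - q))
            - qpoly * (upoly ^ p * wpoly ^ q * X 2 ^ r) := by ring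
      rw [h2]
      exact Submodule.sub_mem _ (ih p (r+2) (by omega)) hmem

noncomputable def goodSet (lam : ℕ) : Submodule ℂ (MvPolynomial (Fin 3) ℂ) where
  carrier := {P | ∃ c : ℤ → ℂ,
    P - ∑ μ ∈ Finset.Icc (-(lam : ℤ)) (lam : ℤ), c μ • vmu lam μ ∈ harmSub lam}
  zero_mem' := ⟨0, by simp⟩
  add_mem' := by
    rintro a b ⟨ca, ha⟩ ⟨cb, hb⟩
    refine ⟨ca + cb, ?_⟩
    have : a + b - ∑ μ ∈ Finset.Icc (-(lam : ℤ)) (lam : ℤ), (ca + cb) μ • vmu lam μ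
        = (a - ∑ μ ∈ Finset.Icc (-(lam : ℤ)) (lam : ℤ), ca μ • vmu lam μ)
          + (b - ∑ μ ∈ Finset.Icc (-(lam : ℤ)) (lam : ℤ), cb μ • vmu lam μ) := by
      simp only [Pi.add_apply, add_smul, Finset.sum_add_distrib]
      ring
    rw [this]
    exact Submodule.add_mem _ ha hb
  smul_mem' := by
    rintro r a ⟨ca, ha⟩
    refine ⟨r • ca, ?_⟩
    have : r • a - ∑ μ ∈ Finset.Icc (-(lam : ℤ)) (lam : ℤ), (r • ca) μ • vmu lam μ
        = r • (a - ∑ μ ∈ Finset.Icc (-(lam : ℤ)) (lam : ℤ), ca μ • vmu lam μ) := by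
      simp only [Pi.smul_apply, smul_eq_mul, mul_smul, smul_sub, Finset.smul_sum]
    rw [this]
    exact Submodule.smul_mem _ _ ha

lemma uwt_mem (lam p q r : ℕ) (h : p + q + r = lam) :
    upoly ^ p * wpoly ^ q * X 2 ^ r ∈ goodSet lam := by
  refine ⟨fun μ => if μ = (p:ℤ) - q then 1 else 0, ?_⟩
  have hsum : ∑ μ ∈ Finset.Icc (-(lam : ℤ)) (lam : ℤ),
      (if μ = (p:ℤ) - q then (1:ℂ) else 0) • vmu lam μ = vmu lam ((p:ℤ) - q) := by
    simp only [ite_smul, one_smul, zero_smul]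
    rw [Finset.sum_ite_eq' (Finset.Icc (-(lam : ℤ)) (lam : ℤ)) ((p:ℤ) - q) (vmu lam)]
    rw [if_pos (by rw [Finset.mem_Icc]; omega)]
  rw [hsum]
  exact key lam p q r h

lemma X0_eq : (X 0 : MvPolynomial (Fin 3) ℂ) = (2⁻¹:ℂ) • (upoly - wpoly) := by
  have h2 : upoly - wpoly = (2:ℂ) • X 0 := by
    rw [upoly, wpoly]; module
  rw [h2, smul_smul]; norm_num

lemma X1_eq : (X 1 : MvPolynomial (Fin 3) ℂ) = ((2*Complex.I)⁻¹:ℂ) • (upoly + wpoly) := by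
  have h2 : upoly + wpoly = ((2:ℂ)*Complex.I) • X 1 := by
    rw [upoly, wpoly]; module
  rw [h2, smul_smul, inv_mul_cancel₀ (by simp [Complex.I_ne_zero]), one_smul]

lemma mon_mem (lam a b c' : ℕ) (h : a + b + c' = lam) :
    (X 0:MvPolynomial (Fin 3) ℂ) ^ a * X 1 ^ b * X 2 ^ c' ∈ goodSet lam := by
  suffices hsuff : (upoly - wpoly) ^ a * (upoly + wpoly) ^ b * X 2 ^ c' ∈ goodSet lam by
    rw [X0_eq, X1_eq, smul_pow, smul_pow, smul_mul_smul_comm, smul_mul_assoc]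
    exact Submodule.smul_mem _ _ hsuff
  rw [sub_eq_add_neg, add_pow, add_pow, Finset.sum_mul, Finset.sum_mul]
  refine Submodule.sum_mem _ fun j hj => ?_
  rw [Finset.mul_sum, Finset.sum_mul]
  refine Submodule.sum_mem _ fun k hk => ?_
  have hj' : j ≤ a := Finset.mem_range_succ_iff.mp hj
  have hk' : k ≤ b := Finset.mem_range_succ_iff.mp hk
  have heq : upoly ^ j * (-wpoly) ^ (a - j) * (a.choose j : MvPolynomial (Fin 3) ℂ)
        * (upoly ^ k * wpoly ^ (b - k) * (b.choose k : MvPolynomial (Fin 3) ℂ)) * X 2 ^ c'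
      = (((-1)^(a-j) * (a.choose j) * (b.choose k)) : ℂ)
        • (upoly ^ (j + k) * wpoly ^ ((a - j) + (b - k)) * X 2 ^ c') := by
    rw [neg_pow]
    simp only [smul_eq_C_mul, map_mul, map_pow, map_neg, map_one, map_natCast]
    ring
  rw [heq]
  exact Submodule.smul_mem _ _ (uwt_mem lam _ _ _ (by omega))

lemma span_le (lam : ℕ) (P : MvPolynomial (Fin 3) ℂ)
    (hP : P ∈ homogeneousSubmodule (Fin 3) ℂ lam) : P ∈ goodSet lam := by
  have hP' : P.IsHomogeneous lam := (mem_homogeneousSubmodule _ _).1 hP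
  rw [← support_sum_monomial_coeff P]
  refine Submodule.sum_mem _ fun m hm => ?_
  have hdeg : m.degree = lam := by
    by_contra hne
    exact (mem_support_iff.mp hm) (hP'.coeff_eq_zero hne)
  have hd2 : m.degree = m 0 + m 1 + m 2 := by
    rw [Finsupp.degree_apply,
      Finset.sum_subset (Finset.subset_univ _) (fun i _ hi => Finsupp.notMem_support_iff.mp hi),
      Fin.sum_univ_three]
  have hmon : monomial m (coeff m P) = coeff m P • (X 0 ^ (m 0) * X 1 ^ (m 1) * X 2 ^ (m 2)
      : MvPolynomial (Fin 3) ℂ) := by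
    have h1 : monomial m (1:ℂ) = X 0 ^ (m 0) * X 1 ^ (m 1) * X 2 ^ (m 2) := by
      rw [monomial_eq, map_one, one_mul, Finsupp.prod_fintype _ _ (by simp)]
      exact Fin.prod_univ_three _
    rw [← h1, smul_monomial, smul_eq_mul, mul_one]
  rw [hmon]
  exact Submodule.smul_mem _ _ (mon_mem lam _ _ _ (by omega))

noncomputable def pt (s : ℂ) : Fin 3 → ℂ := ![(s^2-1)/2, -(Complex.I/2)*(s^2+1), s]

lemma eval_q (s : ℂ) : eval (pt s) qpoly = 0 := by
  simp only [qpoly, map_add, map_pow, eval_X, pt, Matrix.cons_val_zero, Matrix.cons_val_one,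
    Matrix.head_cons, Matrix.cons_val_two, Matrix.tail_cons]
  linear_combination ((s^2+1)^2/4) * Complex.I_sq

lemma eval_harm (lam : ℕ) (s : ℂ) (x : MvPolynomial (Fin 3) ℂ) (hx : x ∈ harmSub lam) :
    eval (pt s) x = 0 := by
  rw [harmSub] at hx
  split_ifs at hx with h
  · obtain ⟨y, -, rfl⟩ := hx
    rw [LinearMap.mulLeft_apply, map_mul, eval_q, zero_mul]
  · rw [Submodule.mem_bot] at hx
    rw [hx, map_zero]

lemma eval_vmu (lam : ℕ) (μ : ℤ) (h1 : -(lam:ℤ) ≤ μ) (h2 : μ ≤ lam) (s : ℂ) :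
    eval (pt s) (vmu lam μ) = s ^ ((lam : ℤ) + μ).toNat := by
  have e2 : eval (pt s) (X 2) = s := by simp [pt]
  by_cases h : 0 ≤ μ
  · rw [vmu, if_pos h, map_mul, map_pow, map_pow, e2]
    have e : eval (pt s) ((1:ℂ) • X 0 + Complex.I • X 1) = s^2 := by
      simp only [smul_eq_C_mul, map_add, map_mul, eval_C, eval_X, pt, Matrix.cons_val_zero,
        Matrix.cons_val_one, Matrix.head_cons, one_mul]
      linear_combination (-(s^2+1)/2) * Complex.I_sq
    rw [e, ← pow_mul, ← pow_add]
    congr 1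
    omega
  · rw [vmu, if_neg h, map_mul, map_pow, map_pow, e2]
    have e : eval (pt s) ((-1:ℂ) • X 0 + Complex.I • X 1) = 1 := by
      simp only [smul_eq_C_mul, map_add, map_mul, eval_C, eval_X, pt, Matrix.cons_val_zero,
        Matrix.cons_val_one, Matrix.head_cons]
      linear_combination (-(s^2+1)/2) * Complex.I_sq
    rw [e, one_pow, one_mul, (by omega : lam - μ.natAbs = ((lam:ℤ) + μ).toNat)]


/-- The `2λ+1` classes of `v_μ` (`−λ ≤ μ ≤ λ`) modulo
`(z₁²+z₂²+z₃²)·ℂ[z₁,z₂,z₃]_{λ−2}` form a basis of the quotient of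
`ℂ[z₁,z₂,z₃]_λ`: they span it and are linearly independent modulo the subspace. -/
theorem vmu_basis_of_quotient (lam : ℕ) :
    (∀ P ∈ homogeneousSubmodule (Fin 3) ℂ lam, ∃ c : ℤ → ℂ,
        P - ∑ μ ∈ Finset.Icc (-(lam : ℤ)) (lam : ℤ), c μ • vmu lam μ ∈ harmSub lam) ∧
    (∀ c : ℤ → ℂ,
        (∑ μ ∈ Finset.Icc (-(lam : ℤ)) (lam : ℤ), c μ • vmu lam μ) ∈ harmSub lam →
        ∀ μ ∈ Finset.Icc (-(lam : ℤ)) (lam : ℤ), c μ = 0) := by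
  constructor
  · exact fun P hP => span_le lam P hP
  · intro c hc μ hμ
    rw [Finset.mem_Icc] at hμ
    have hs : ∀ s : ℂ, ∑ ν ∈ Finset.Icc (-(lam : ℤ)) (lam : ℤ),
        c ν * s ^ ((lam : ℤ) + ν).toNat = 0 := by
      intro s
      have h0 := eval_harm lam s _ hc
      rw [map_sum] at h0
      rw [Finset.sum_congr rfl (fun ν hν => ?_)] at h0
      · exact h0
      · rw [Finset.mem_Icc] at hν
        rw [smul_eq_C_mul, map_mul, eval_C, eval_vmu lam ν hν.1 hν.2 s]
    set p : Polynomial ℂ :=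
      ∑ ν ∈ Finset.Icc (-(lam : ℤ)) (lam : ℤ),
        Polynomial.C (c ν) * Polynomial.X ^ ((lam : ℤ) + ν).toNat with hp
    have hp0 : p = 0 := by
      apply Polynomial.funext
      intro s
      rw [Polynomial.eval_zero, hp, Polynomial.eval_finset_sum]
      simp only [Polynomial.eval_mul, Polynomial.eval_C, Polynomial.eval_pow, Polynomial.eval_X]
      exact hs s
    have hco := congrArg (fun q : Polynomial ℂ => q.coeff ((lam : ℤ) + μ).toNat) hp0
    simp only [hp, Polynomial.finset_sum_coeff, Polynomial.coeff_C_mul, Polynomial.coeff_X_pow,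
      Polynomial.coeff_zero] at hco
    rw [Finset.sum_eq_single μ (fun ν hν hne => ?_) (fun h => absurd (Finset.mem_Icc.mpr hμ) h)]
      at hco
    · rw [if_pos rfl, mul_one] at hco
      exact hco
    · rw [Finset.mem_Icc] at hν
      rw [if_neg (by omega), mul_zero]
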